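/- Let a,b>0 with ab≥1, let ρ:[0,1]→[0,1] be measurable and f(x)=∫_0^x ρ(t)dt. Then the infimum of J*(f,g) over all g(x)=∫_0^x σ(t)dt with σ:[0,1]→[0,1] measurable equals min_{y∈[0,1]} { f(y)·log a + y·log(1/(1+a)) + (1−y)·log(b/(1+b)) − (f(1)−f(y))·log b }. -/

import Mathlib

open Finset

/-- `h(x) = x log x + (1−x) log(1−x)` (with `0·log 0 = 0`, as `Real.log 0 = 0`). -/
noncomputable def hEnt (x : ℝ) : ℝ := x * Real.log x + (1 - x) * Real.log (1 - x)

/-- `J*(f,g) = ∫₀¹ h(σ) + log(ab)·min_{[0,1]}(f−g) − log(b)·(f(1)−g(1))`, where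
`g(x) = ∫₀ˣ σ(t) dt` is encoded by its density `σ`. -/
noncomputable def Jstar (a b : ℝ) (f σ : ℝ → ℝ) : ℝ :=
  (∫ x in (0:ℝ)..1, hEnt (σ x))
    + Real.log (a * b) * sInf ((fun x => f x - ∫ t in (0:ℝ)..x, σ t) '' Set.Icc 0 1)
    - Real.log b * (f 1 - ∫ t in (0:ℝ)..1, σ t)

/-- `J_*(f,G) = ∫₀¹ [ρ log G + (1−ρ) log(1−G)]`, where `f(x) = ∫₀ˣ ρ(t) dt`. -/
noncomputable def Jlow (ρ G : ℝ → ℝ) : ℝ :=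
  ∫ x in (0:ℝ)..1, (ρ x * Real.log (G x) + (1 - ρ x) * Real.log (1 - G x))

lemma hEnt_cont : Continuous hEnt := by
  have h1 : Continuous fun x : ℝ => x * Real.log x := Real.continuous_mul_log
  have h2 : Continuous fun x : ℝ => (1 - x) * Real.log (1 - x) :=
    h1.comp (continuous_const.sub continuous_id)
  exact h1.add h2

lemma ent_ge {c s : ℝ} (hc : 0 < c) (hc1 : c < 1) (hs : s ∈ Set.Icc (0:ℝ) 1) :
    s * Real.log c + (1 - s) * Real.log (1 - c) ≤ hEnt s := by
  obtain ⟨hs0, hs1⟩ := hs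
  rcases eq_or_lt_of_le hs0 with h0 | h0
  · simp [hEnt, ← h0]
    nlinarith [Real.log_nonpos (by linarith) (by linarith : 1 - c ≤ 1)]
  rcases eq_or_lt_of_le hs1 with h1 | h1
  · simp [hEnt, h1]
    nlinarith [Real.log_nonpos hc.le hc1.le]
  · have k1 : Real.log c - Real.log s ≤ c / s - 1 := by
      have := Real.log_le_sub_one_of_pos (show 0 < c / s by positivity)
      rwa [Real.log_div hc.ne' h0.ne'] at this
    have k2 : Real.log (1-c) - Real.log (1-s) ≤ (1-c) / (1-s) - 1 := by
      have := Real.log_le_sub_one_of_pos (show 0 < (1-c) / (1-s) by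
        apply div_pos <;> linarith)
      rwa [Real.log_div (by linarith) (by linarith)] at this
    have m1 : s * (Real.log c - Real.log s) ≤ c - s := by
      have := mul_le_mul_of_nonneg_left k1 hs0
      have e : s * (c / s - 1) = c - s := by field_simp
      linarith
    have m2 : (1-s) * (Real.log (1-c) - Real.log (1-s)) ≤ (1-c) - (1-s) := by
      have h1s : (0:ℝ) < 1 - s := by linarith
      have := mul_le_mul_of_nonneg_left k2 h1s.le
      have e : (1-s) * ((1-c) / (1-s) - 1) = (1-c) - (1-s) := by field_simp
      linarith
    unfold hEnt; nlinarith

open MeasureTheory intervalIntegral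

lemma II_bdd {F : ℝ → ℝ} (hF : Measurable F) {C : ℝ}
    (hbd : ∀ x ∈ Set.Icc (0:ℝ) 1, |F x| ≤ C) {u v : ℝ}
    (hu : u ∈ Set.Icc (0:ℝ) 1) (hv : v ∈ Set.Icc (0:ℝ) 1) :
    IntervalIntegrable F volume u v := by
  rw [intervalIntegrable_iff]
  have hfin : IsFiniteMeasure (volume.restrict (Set.uIoc u v)) :=
    ⟨by rw [Measure.restrict_apply_univ]; exact measure_Ioc_lt_top⟩
  apply Integrable.mono' (integrable_const C) hF.aestronglyMeasurable.restrict
  rw [ae_restrict_iff' measurableSet_uIoc]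
  filter_upwards with x hx
  exact hbd x (Set.uIcc_subset_Icc hu hv (Set.uIoc_subset_uIcc hx))


theorem stmt14 (a b : ℝ) (ha : 0 < a) (hb : 0 < b) (hab : 1 ≤ a * b)
    (ρ : ℝ → ℝ) (hmeas : Measurable ρ)
    (hrange : ∀ x ∈ Set.Icc (0:ℝ) 1, ρ x ∈ Set.Icc (0:ℝ) 1) :
    sInf {v | ∃ σ : ℝ → ℝ, Measurable σ ∧ (∀ x ∈ Set.Icc (0:ℝ) 1, σ x ∈ Set.Icc (0:ℝ) 1) ∧
        v = Jstar a b (fun x => ∫ t in (0:ℝ)..x, ρ t) σ}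
      = sInf {v | ∃ y ∈ Set.Icc (0:ℝ) 1,
        v = (∫ t in (0:ℝ)..y, ρ t) * Real.log a + y * Real.log (1 / (1 + a))
            + (1 - y) * Real.log (b / (1 + b))
            - ((∫ t in (0:ℝ)..1, ρ t) - ∫ t in (0:ℝ)..y, ρ t) * Real.log b} := by
  have ha1 : (0:ℝ) < 1 + a := by linarith
  have hb1 : (0:ℝ) < 1 + b := by linarith
  set c₁ : ℝ := a / (1 + a) with hc₁def
  set c₂ : ℝ := 1 / (1 + b) with hc₂def
  have hc₁ : 0 < c₁ := div_pos ha ha1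
  have hc₁1 : c₁ < 1 := by rw [hc₁def, div_lt_one ha1]; linarith
  have hc₂ : 0 < c₂ := div_pos one_pos hb1
  have hc₂1 : c₂ < 1 := by rw [hc₂def, div_lt_one hb1]; linarith
  have e1 : Real.log c₁ = Real.log a - Real.log (1+a) := Real.log_div ha.ne' ha1.ne'
  have e2 : Real.log (1 - c₁) = -Real.log (1+a) := by
    rw [show (1:ℝ) - c₁ = 1/(1+a) by rw [hc₁def]; field_simp; ring,
      Real.log_div one_ne_zero ha1.ne', Real.log_one, zero_sub]
  have e3 : Real.log c₂ = -Real.log (1+b) := by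
    rw [hc₂def, Real.log_div one_ne_zero hb1.ne', Real.log_one, zero_sub]
  have e4 : Real.log (1 - c₂) = Real.log b - Real.log (1+b) := by
    rw [show (1:ℝ) - c₂ = b/(1+b) by rw [hc₂def]; field_simp; ring, Real.log_div hb.ne' hb1.ne']
  have hlog1 : Real.log (1/(1+a)) = -Real.log (1+a) := by
    rw [Real.log_div one_ne_zero ha1.ne', Real.log_one, zero_sub]
  have hlog2 : Real.log (b/(1+b)) = Real.log b - Real.log (1+b) :=
    Real.log_div hb.ne' hb1.ne'
  have hlogab : Real.log (a*b) = Real.log a + Real.log b := Real.log_mul ha.ne' hb.ne'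
  have hab0 : 0 ≤ Real.log (a*b) := Real.log_nonneg hab
  -- pointwise bounds
  have pw1 : ∀ s ∈ Set.Icc (0:ℝ) 1, s * Real.log a - Real.log (1+a) ≤ hEnt s := by
    intro s hs
    have h := ent_ge hc₁ hc₁1 hs
    rw [e1, e2] at h; nlinarith [h]
  have pw2 : ∀ s ∈ Set.Icc (0:ℝ) 1,
      s * (-Real.log b) + (Real.log b - Real.log (1+b)) ≤ hEnt s := by
    intro s hs
    have h := ent_ge hc₂ hc₂1 hs
    rw [e3, e4] at h; nlinarith [h]
  have eq1 : hEnt c₁ = c₁ * Real.log a - Real.log (1+a) := by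
    rw [hEnt, e1, e2]; ring
  have eq2 : hEnt c₂ = -(c₂ * Real.log b) + (Real.log b - Real.log (1+b)) := by
    rw [hEnt, e3, e4]; ring
  -- bound on hEnt
  obtain ⟨C, hC⟩ : ∃ C, ∀ x ∈ Set.Icc (0:ℝ) 1, ‖hEnt x‖ ≤ C :=
    isCompact_Icc.exists_bound_of_continuousOn hEnt_cont.continuousOn
  have hmem01 : ∀ {u : ℝ}, u ∈ Set.Icc (0:ℝ) 1 → u ∈ Set.Icc (0:ℝ) 1 := fun h => h
  -- generic integrability facts for a density in [0,1]
  have hIdens : ∀ (σ : ℝ → ℝ), Measurable σ →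
      (∀ x ∈ Set.Icc (0:ℝ) 1, σ x ∈ Set.Icc (0:ℝ) 1) →
      ∀ u ∈ Set.Icc (0:ℝ) 1, ∀ v ∈ Set.Icc (0:ℝ) 1,
      IntervalIntegrable σ volume u v := by
    intro σ hm hr u hu v hv
    refine II_bdd hm (C := 1) (fun x hx => ?_) hu hv
    have := hr x hx
    rw [abs_le]; constructor <;> [linarith [this.1]; exact this.2]
  have hIh : ∀ (σ : ℝ → ℝ), Measurable σ →
      (∀ x ∈ Set.Icc (0:ℝ) 1, σ x ∈ Set.Icc (0:ℝ) 1) →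
      ∀ u ∈ Set.Icc (0:ℝ) 1, ∀ v ∈ Set.Icc (0:ℝ) 1,
      IntervalIntegrable (fun x => hEnt (σ x)) volume u v := by
    intro σ hm hr u hu v hv
    refine II_bdd (hEnt_cont.measurable.comp hm) (C := C)
      (fun x hx => hC _ (hr x hx)) hu hv
  -- continuity of primitives
  have hprim : ∀ (σ : ℝ → ℝ), Measurable σ →
      (∀ x ∈ Set.Icc (0:ℝ) 1, σ x ∈ Set.Icc (0:ℝ) 1) →
      ContinuousOn (fun x => ∫ t in (0:ℝ)..x, σ t) (Set.Icc 0 1) := by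
    intro σ hm hr
    have h := intervalIntegral.continuousOn_primitive_interval'
      (hIdens σ hm hr 0 (by norm_num) 1 (by norm_num))
      (by rw [Set.uIcc_of_le (zero_le_one)]; exact Set.left_mem_Icc.2 zero_le_one)
    rwa [Set.uIcc_of_le (zero_le_one : (0:ℝ) ≤ 1)] at h
  have hfcont : ContinuousOn (fun x => ∫ t in (0:ℝ)..x, ρ t) (Set.Icc 0 1) :=
    hprim ρ hmeas hrange
  set F : ℝ → ℝ := fun y => (∫ t in (0:ℝ)..y, ρ t) * Real.log a
      + y * Real.log (1 / (1 + a)) + (1 - y) * Real.log (b / (1 + b))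
      - ((∫ t in (0:ℝ)..1, ρ t) - ∫ t in (0:ℝ)..y, ρ t) * Real.log b with hFdef
  have hFcont : ContinuousOn F (Set.Icc 0 1) := by
    rw [hFdef]
    exact (((hfcont.mul continuousOn_const).add
      ((continuousOn_id.mul continuousOn_const))).add
      ((continuousOn_const.sub continuousOn_id).mul continuousOn_const)).sub
      ((continuousOn_const.sub hfcont).mul continuousOn_const)
  have hRset : {v | ∃ y ∈ Set.Icc (0:ℝ) 1,
        v = (∫ t in (0:ℝ)..y, ρ t) * Real.log a + y * Real.log (1 / (1 + a))
            + (1 - y) * Real.log (b / (1 + b))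
            - ((∫ t in (0:ℝ)..1, ρ t) - ∫ t in (0:ℝ)..y, ρ t) * Real.log b}
      = F '' Set.Icc 0 1 := by
    ext v
    simp only [Set.mem_setOf_eq, Set.mem_image, hFdef]
    constructor
    · rintro ⟨y, hy, rfl⟩; exact ⟨y, hy, rfl⟩
    · rintro ⟨y, hy, rfl⟩; exact ⟨y, hy, rfl⟩
  rw [hRset]
  have hRbdd : BddBelow (F '' Set.Icc 0 1) :=
    (isCompact_Icc.image_of_continuousOn hFcont).bddBelow
  have hRne : (F '' Set.Icc 0 1).Nonempty :=
    ⟨F 0, 0, Set.left_mem_Icc.2 zero_le_one, rfl⟩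
  have h0m : (0:ℝ) ∈ Set.Icc (0:ℝ) 1 := Set.left_mem_Icc.2 zero_le_one
  have h1m : (1:ℝ) ∈ Set.Icc (0:ℝ) 1 := Set.right_mem_Icc.2 zero_le_one
  -- LOWER BOUND
  have lower : ∀ (σ : ℝ → ℝ), Measurable σ →
      (∀ x ∈ Set.Icc (0:ℝ) 1, σ x ∈ Set.Icc (0:ℝ) 1) →
      ∃ y ∈ Set.Icc (0:ℝ) 1, F y ≤ Jstar a b (fun x => ∫ t in (0:ℝ)..x, ρ t) σ := by
    intro σ hm hr
    have hgcont : ContinuousOn (fun x => ∫ t in (0:ℝ)..x, σ t) (Set.Icc 0 1) :=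
      hprim σ hm hr
    obtain ⟨y, hy, hmin⟩ := isCompact_Icc.exists_isMinOn
      ⟨0, h0m⟩ (hfcont.sub hgcont)
    refine ⟨y, hy, ?_⟩
    have hinf : sInf ((fun x => (∫ t in (0:ℝ)..x, ρ t) - ∫ t in (0:ℝ)..x, σ t)
          '' Set.Icc 0 1)
        = (∫ t in (0:ℝ)..y, ρ t) - ∫ t in (0:ℝ)..y, σ t := by
      apply IsLeast.csInf_eq
      refine ⟨⟨y, hy, rfl⟩, ?_⟩
      rintro w ⟨x, hx, rfl⟩
      exact isMinOn_iff.1 hmin x hx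
    have hym : y ∈ Set.Icc (0:ℝ) 1 := hy
    have I1 := hIh σ hm hr 0 h0m y hym
    have I2 := hIh σ hm hr y hym 1 h1m
    have J1 := hIdens σ hm hr 0 h0m y hym
    have J2 := hIdens σ hm hr y hym 1 h1m
    have hsplit : (∫ x in (0:ℝ)..1, hEnt (σ x))
        = (∫ x in (0:ℝ)..y, hEnt (σ x)) + ∫ x in y..1, hEnt (σ x) :=
      (integral_add_adjacent_intervals I1 I2).symm
    have hsplitg : (∫ t in (0:ℝ)..1, σ t)
        = (∫ t in (0:ℝ)..y, σ t) + ∫ t in y..1, σ t :=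
      (integral_add_adjacent_intervals J1 J2).symm
    have hA : (∫ t in (0:ℝ)..y, σ t) * Real.log a - y * Real.log (1+a)
        ≤ ∫ x in (0:ℝ)..y, hEnt (σ x) := by
      have hmono := integral_mono_on hy.1
        ((J1.mul_const (Real.log a)).sub intervalIntegrable_const) I1
        (fun x hx => pw1 (σ x) (hr x (Set.Icc_subset_Icc_right hy.2 hx)))
      rwa [integral_sub (J1.mul_const _) intervalIntegrable_const,
        intervalIntegral.integral_mul_const, intervalIntegral.integral_const, smul_eq_mul, sub_zero] at hmono
    have hB : (∫ t in y..1, σ t) * (-Real.log b)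
          + (1 - y) * (Real.log b - Real.log (1+b))
        ≤ ∫ x in y..1, hEnt (σ x) := by
      have hmono := integral_mono_on hy.2
        ((J2.mul_const (-Real.log b)).add intervalIntegrable_const) I2
        (fun x hx => pw2 (σ x) (hr x (Set.Icc_subset_Icc_left hy.1 hx)))
      rwa [integral_add (J2.mul_const _) intervalIntegrable_const,
        intervalIntegral.integral_mul_const, intervalIntegral.integral_const, smul_eq_mul] at hmono
    simp only [Jstar]
    rw [hinf, hlogab, hsplit, hsplitg]
    simp only [hFdef, hlog1, hlog2]
    ring_nf
    ring_nf at hA hB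
    linarith [hA, hB]
  -- UPPER BOUND
  have upper : ∀ y ∈ Set.Icc (0:ℝ) 1, ∃ σ : ℝ → ℝ, Measurable σ ∧
      (∀ x ∈ Set.Icc (0:ℝ) 1, σ x ∈ Set.Icc (0:ℝ) 1) ∧
      Jstar a b (fun x => ∫ t in (0:ℝ)..x, ρ t) σ ≤ F y := by
    intro y hy
    set σy : ℝ → ℝ := fun x => if x ≤ y then c₁ else c₂ with hσydef
    have hmσ : Measurable σy :=
      Measurable.ite measurableSet_Iic measurable_const measurable_const
    have hrσ : ∀ x ∈ Set.Icc (0:ℝ) 1, σy x ∈ Set.Icc (0:ℝ) 1 := by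
      intro x _; rw [hσydef]; dsimp only
      split_ifs
      · exact ⟨hc₁.le, hc₁1.le⟩
      · exact ⟨hc₂.le, hc₂1.le⟩
    refine ⟨σy, hmσ, hrσ, ?_⟩
    have E2 : (∫ t in (0:ℝ)..y, σy t) = c₁ * y := by
      rw [integral_congr (g := fun _ => c₁) (fun x hx => ?_),
        intervalIntegral.integral_const, smul_eq_mul, sub_zero, mul_comm]
      rw [Set.uIcc_of_le hy.1] at hx
      rw [hσydef]; exact if_pos hx.2
    have E3 : (∫ t in y..1, σy t) = c₂ * (1 - y) := by
      rw [intervalIntegral.integral_congr_ae ?_, intervalIntegral.integral_const, smul_eq_mul, mul_comm]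
      filter_upwards with x
      intro hx
      rw [Set.uIoc_of_le hy.2] at hx
      rw [hσydef]; exact if_neg (not_le.2 hx.1)
    have E1a : (∫ x in (0:ℝ)..y, hEnt (σy x)) = y * hEnt c₁ := by
      rw [integral_congr (g := fun _ => hEnt c₁) (fun x hx => ?_),
        intervalIntegral.integral_const, smul_eq_mul, sub_zero]
      rw [Set.uIcc_of_le hy.1] at hx
      rw [hσydef]; dsimp only; rw [if_pos hx.2]
    have E1b : (∫ x in y..1, hEnt (σy x)) = (1 - y) * hEnt c₂ := by
      rw [intervalIntegral.integral_congr_ae ?_, intervalIntegral.integral_const, smul_eq_mul]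
      filter_upwards with x
      intro hx
      rw [Set.uIoc_of_le hy.2] at hx
      rw [hσydef]; dsimp only; rw [if_neg (not_le.2 hx.1)]
    have E1 : (∫ x in (0:ℝ)..1, hEnt (σy x)) = y * hEnt c₁ + (1 - y) * hEnt c₂ := by
      rw [← E1a, ← E1b]
      exact (integral_add_adjacent_intervals (hIh σy hmσ hrσ 0 h0m y hy)
        (hIh σy hmσ hrσ y hy 1 h1m)).symm
    have Eg1 : (∫ t in (0:ℝ)..1, σy t) = c₁ * y + c₂ * (1 - y) := by
      rw [← E2, ← E3]
      exact (integral_add_adjacent_intervals (hIdens σy hmσ hrσ 0 h0m y hy)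
        (hIdens σy hmσ hrσ y hy 1 h1m)).symm
    have hSbdd : BddBelow ((fun x => (∫ t in (0:ℝ)..x, ρ t)
        - ∫ t in (0:ℝ)..x, σy t) '' Set.Icc 0 1) :=
      (isCompact_Icc.image_of_continuousOn
        (hfcont.sub (hprim σy hmσ hrσ))).bddBelow
    have hinf_le : sInf ((fun x => (∫ t in (0:ℝ)..x, ρ t)
          - ∫ t in (0:ℝ)..x, σy t) '' Set.Icc 0 1)
        ≤ (∫ t in (0:ℝ)..y, ρ t) - c₁ * y :=
      csInf_le hSbdd ⟨y, hy, by dsimp only; rw [E2]⟩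
    have hmul := mul_le_mul_of_nonneg_left hinf_le hab0
    rw [hlogab] at hmul
    simp only [Jstar]
    rw [E1, Eg1, hlogab, eq1, eq2]
    simp only [hFdef, hlog1, hlog2]
    ring_nf
    ring_nf at hmul
    linarith [hmul]
  -- ASSEMBLY
  have hLbdd : BddBelow {v | ∃ σ : ℝ → ℝ, Measurable σ ∧
      (∀ x ∈ Set.Icc (0:ℝ) 1, σ x ∈ Set.Icc (0:ℝ) 1) ∧
      v = Jstar a b (fun x => ∫ t in (0:ℝ)..x, ρ t) σ} := by
    refine ⟨sInf (F '' Set.Icc 0 1), ?_⟩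
    rintro v ⟨σ', hm', hr', rfl⟩
    obtain ⟨y', hy', hle'⟩ := lower σ' hm' hr'
    exact le_trans (csInf_le hRbdd ⟨y', hy', rfl⟩) hle'
  refine le_antisymm (le_csInf hRne ?_) (le_csInf ?_ ?_)
  · rintro w ⟨y, hy, rfl⟩
    obtain ⟨σ, hmσ, hrσ, hle⟩ := upper y hy
    exact le_trans (csInf_le hLbdd ⟨σ, hmσ, hrσ, rfl⟩) hle
  · obtain ⟨σ, hmσ, hrσ, _⟩ := upper 0 h0m
    exact ⟨_, σ, hmσ, hrσ, rfl⟩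
  · rintro v ⟨σ, hm, hr, rfl⟩
    obtain ⟨y, hy, hle⟩ := lower σ hm hr
    exact le_trans (csInf_le hRbdd ⟨y, hy, rfl⟩) hle
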